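/- arXiv:2203.09630 — 6 statements merged into one kernel-verified Lean document; each statement's English description precedes it below -/
import Mathlib

section
/- For the reciprocal sigmoid function f_R(x) = (1/2)·(x/(1+|x|)) + 1/2, the function softmin_{f_R}(x, 0) := x · f_R(−x) is strictly monotonically increasing in x, with derivative at least (1/2)·1/(1+|x|)² > 0 for all real x. -/
open Filter

noncomputable def fR (x : ℝ) : ℝ := (1/2) * (x / (1 + |x|)) + 1/2

private noncomputable def Dg (x : ℝ) : ℝ := fR (-x) - x / (2 * (1 + |x|)^2)

private lemma hasDerivAt_g (x : ℝ) : HasDerivAt (fun y : ℝ => y * fR (-y)) (Dg x) x := by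
  rcases lt_trichotomy x 0 with hx | hx | hx
  · have h2 : HasDerivAt (fun y : ℝ => (1:ℝ) - y) (-1) x := by
      simpa using (hasDerivAt_id' x).const_sub (1:ℝ)
    have hne : (1:ℝ) - x ≠ 0 := by linarith
    have h1 : HasDerivAt (fun y : ℝ => -y / (1 - y))
        ((-1 * (1 - x) - (-x) * (-1)) / (1 - x)^2) x :=
      ((hasDerivAt_id x).neg).div h2 hne
    have h3 : HasDerivAt (fun y : ℝ => y * ((1/2) * (-y / (1 - y)) + 1/2))
        (1 * ((1/2) * (-x / (1 - x)) + 1/2) +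
          x * ((1/2) * ((-1 * (1 - x) - (-x) * (-1)) / (1 - x)^2))) x :=
      (hasDerivAt_id x).mul ((h1.const_mul (1/2)).add_const (1/2))
    have heq : (fun y : ℝ => y * fR (-y)) =ᶠ[nhds x]
        (fun y : ℝ => y * ((1/2) * (-y / (1 - y)) + 1/2)) := by
      filter_upwards [Iio_mem_nhds hx] with y hy
      have h : |(-y : ℝ)| = -y := abs_of_pos (by simpa using hy)
      rw [fR, h]
      ring_nf
    have := h3.congr_of_eventuallyEq heq
    refine this.congr_deriv ?_
    have habs : |x| = -x := abs_of_neg hx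
    simp only [Dg, fR, habs, abs_neg]
    rw [show (1:ℝ) + -x = 1 - x by ring]
    have hs : ((1:ℝ) - x)^2 ≠ 0 := pow_ne_zero _ hne
    field_simp
    ring
  · subst hx
    rw [hasDerivAt_iff_tendsto_slope]
    have hc : ContinuousAt (fun y : ℝ => fR (-y)) 0 := by
      apply ContinuousAt.add _ continuousAt_const
      apply ContinuousAt.mul continuousAt_const
      apply ContinuousAt.div
      · exact continuousAt_id.neg
      · exact continuousAt_const.add (continuous_abs.continuousAt.comp continuousAt_id.neg)
      · have : (0:ℝ) < 1 + |(-0 : ℝ)| := by positivity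
        simpa using this.ne'
    have hval : Dg 0 = fR (-0) := by norm_num [Dg]
    have ht : Tendsto (fun y : ℝ => fR (-y)) (nhdsWithin 0 {(0:ℝ)}ᶜ) (nhds (Dg 0)) := by
      rw [hval]
      exact tendsto_nhdsWithin_of_tendsto_nhds hc.tendsto
    apply ht.congr'
    filter_upwards [self_mem_nhdsWithin] with y hy
    have hy' : (y:ℝ) ≠ 0 := hy
    simp [slope, inv_mul_cancel_left₀ hy']
  · have h2 : HasDerivAt (fun y : ℝ => (1:ℝ) + y) 1 x := by
      simpa using (hasDerivAt_id' x).const_add (1:ℝ)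
    have hne : (1:ℝ) + x ≠ 0 := by linarith
    have h1 : HasDerivAt (fun y : ℝ => -y / (1 + y))
        ((-1 * (1 + x) - (-x) * 1) / (1 + x)^2) x :=
      ((hasDerivAt_id x).neg).div h2 hne
    have h3 : HasDerivAt (fun y : ℝ => y * ((1/2) * (-y / (1 + y)) + 1/2))
        (1 * ((1/2) * (-x / (1 + x)) + 1/2) +
          x * ((1/2) * ((-1 * (1 + x) - (-x) * 1) / (1 + x)^2))) x :=
      (hasDerivAt_id x).mul ((h1.const_mul (1/2)).add_const (1/2))
    have heq : (fun y : ℝ => y * fR (-y)) =ᶠ[nhds x]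
        (fun y : ℝ => y * ((1/2) * (-y / (1 + y)) + 1/2)) := by
      filter_upwards [Ioi_mem_nhds hx] with y hy
      have h : |(-y : ℝ)| = y := by rw [abs_neg]; exact abs_of_pos hy
      rw [fR, h]
    have := h3.congr_of_eventuallyEq heq
    refine this.congr_deriv ?_
    have habs : |x| = x := abs_of_pos hx
    simp only [Dg, fR, habs, abs_neg]
    have hs : ((1:ℝ) + x)^2 ≠ 0 := pow_ne_zero _ hne
    field_simp
    ring

private lemma bound (x : ℝ) : (1/2) * (1 / (1 + |x|)^2) ≤ Dg x := by
  rcases le_or_gt 0 x with hx | hx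
  · have habs : |x| = x := abs_of_nonneg hx
    have hne : (0:ℝ) < 1 + x := by linarith
    simp only [Dg, fR, habs, abs_neg]
    have heq : (1/2) * (-x / (1 + x)) + 1/2 - x / (2 * (1 + x)^2)
        = (1/2) * (1 / (1 + x)^2) := by
      field_simp
      ring
    rw [heq]
  · have habs : |x| = -x := abs_of_neg hx
    have hne : (0:ℝ) < 1 - x := by linarith
    simp only [Dg, fR, habs, abs_neg]
    rw [show (1:ℝ) + -x = 1 - x by ring, ← sub_nonneg]
    have heq : (1/2) * (-x / (1 - x)) + 1/2 - x / (2 * (1 - x)^2)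
        - (1/2) * (1 / (1 - x)^2) = (x^2 - 2*x) / (1 - x)^2 := by
      field_simp
      ring
    rw [heq]
    apply div_nonneg (by nlinarith) (by positivity)

theorem stmt_0 :
    StrictMono (fun x : ℝ => x * fR (-x)) ∧
    ∀ x : ℝ,
      (1/2) * (1 / (1 + |x|)^2) ≤ deriv (fun y : ℝ => y * fR (-y)) x ∧
      0 < (1/2) * (1 / (1 + |x|)^2) := by
  have hderiv : ∀ x : ℝ, deriv (fun y : ℝ => y * fR (-y)) x = Dg x :=
    fun x => (hasDerivAt_g x).deriv
  constructor
  · apply strictMono_of_deriv_pos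
    intro x
    rw [hderiv x]
    have h1 : (0:ℝ) < (1/2) * (1 / (1 + |x|)^2) := by positivity
    linarith [bound x]
  · intro x
    refine ⟨?_, by positivity⟩
    rw [hderiv x]
    exact bound x
end

section
/- Let f : ℝ → [0,1] be a differentiable sigmoid function (monotonically non-decreasing, f(x) + f(−x) = 1, lim_{x→−∞} f(x) = 0, lim_{x→∞} f(x) = 1). If the function x ↦ x·f(−x) is monotonically non-decreasing on ℝ and lim_{x→∞} x²·f'(x) exists, then lim_{x→∞} x²·f'(x) > 0 (i.e., f'(x) ∈ Ω(1/x²)). -/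
open Filter

theorem stmt_6 (f : ℝ → ℝ)
    (hdiff : Differentiable ℝ f)
    (hrange : ∀ x, f x ∈ Set.Icc (0:ℝ) 1)
    (hmono : Monotone f)
    (hsym : ∀ x, f x + f (-x) = 1)
    (hbot : Tendsto f atBot (nhds 0))
    (htop : Tendsto f atTop (nhds 1))
    (hswap : Monotone (fun x : ℝ => x * f (-x)))
    (L : ℝ)
    (hlim : Tendsto (fun x : ℝ => x^2 * deriv f x) atTop (nhds L)) :
    0 < L := by
  have hf0 : f 0 = 1/2 := by have := hsym 0; simp at this; linarith
  -- Step B : f(-1) > 0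
  have hf1 : 0 < f (-1) := by
    by_contra h
    push_neg at h
    have hf1z : f (-1) = 0 := le_antisymm h (hrange (-1)).1
    have hzero : ∀ y ∈ Set.Ioo (-1 : ℝ) 0, f y = 0 := by
      intro y hy
      have h1 : (-y) * f (-(-y)) ≤ 1 * f (-1) := hswap (by linarith [hy.1] : (-y : ℝ) ≤ 1)
      rw [neg_neg, hf1z, one_mul] at h1
      have h2 : 0 ≤ f y := (hrange y).1
      nlinarith [hy.2]
    have ht1 : Tendsto f (nhdsWithin (0:ℝ) (Set.Iio 0)) (nhds (f 0)) :=
      (hdiff.continuous.continuousAt).tendsto.mono_left nhdsWithin_le_nhds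
    have ht2 : Tendsto f (nhdsWithin (0:ℝ) (Set.Iio 0)) (nhds 0) := by
      have hev : ∀ᶠ y in nhdsWithin (0:ℝ) (Set.Iio 0), f y = 0 := by
        filter_upwards [Ioo_mem_nhdsLT_of_mem (by norm_num : (0:ℝ) ∈ Set.Ioc (-1) 0)] with y hy
        exact hzero y hy
      exact Tendsto.congr' (by filter_upwards [hev] with y hy; exact hy.symm) tendsto_const_nhds
    have : f 0 = 0 := tendsto_nhds_unique ht1 ht2
    rw [hf0] at this; norm_num at this
  -- Suppose L ≤ 0
  by_contra hL
  push_neg at hL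
  set ε := f (-1) / 2 with hε
  have hεpos : 0 < ε := by positivity
  have hev : ∀ᶠ x in atTop, x^2 * deriv f x < ε :=
    hlim.eventually_lt_const (by linarith)
  obtain ⟨x0, hx0⟩ := (hev.and (eventually_ge_atTop (1:ℝ))).exists_forall_of_atTop
  set a := x0 ⊔ 1 with ha
  have hapos : (0:ℝ) < a := lt_of_lt_of_le one_pos le_sup_right
  have ha1 : (1:ℝ) ≤ a := le_sup_right
  -- g(t) = f t + ε / t is antitone on [a, ∞)
  have hanti : AntitoneOn (fun t => f t + ε * t⁻¹) (Set.Ici a) := by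
    apply antitoneOn_of_deriv_nonpos (convex_Ici a)
    · exact (hdiff.continuous.continuousOn.add (continuousOn_const.mul
        (continuousOn_id.inv₀ (fun t ht => by
          have : a ≤ t := ht
          exact ne_of_gt (lt_of_lt_of_le hapos this)))))
    · intro t ht
      rw [interior_Ici] at ht
      have htpos : (0:ℝ) < t := lt_trans hapos ht
      exact ((hdiff t).add (((hasDerivAt_inv htpos.ne').differentiableAt).const_mul ε)).differentiableWithinAt
    · intro t ht
      rw [interior_Ici] at ht
      have htpos : (0:ℝ) < t := lt_trans hapos ht
      have hd : HasDerivAt (fun t : ℝ => f t + ε * t⁻¹) (deriv f t + ε * (-(t^2)⁻¹)) t :=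
        (hdiff t).hasDerivAt.add ((hasDerivAt_inv htpos.ne').const_mul ε)
      rw [hd.deriv]
      have hx0t : x0 ≤ t := le_trans (le_sup_left : x0 ≤ a) ht.le
      have hlt : t^2 * deriv f t < ε := (hx0 t hx0t).1
      have h2 : (0:ℝ) < t^2 := by positivity
      have : deriv f t < ε * (t^2)⁻¹ := by
        rw [← div_eq_mul_inv]
        exact (lt_div_iff₀ h2).mpr (by nlinarith)
      nlinarith [this]
  -- derive 1 ≤ f a + ε / a
  have hone : (1:ℝ) ≤ f a + ε * a⁻¹ := by
    apply le_of_tendsto htop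
    filter_upwards [eventually_ge_atTop a] with y hy
    have := hanti (Set.self_mem_Ici) (Set.mem_Ici.mpr hy) hy
    have hy0 : (0:ℝ) < y := lt_of_lt_of_le hapos hy
    have : f y + ε * y⁻¹ ≤ f a + ε * a⁻¹ := this
    nlinarith [inv_pos.mpr hy0, hεpos]
  -- combine with hswap
  have hfa : f (-a) = 1 - f a := by linarith [hsym a]
  have hsw : 1 * f (-1) ≤ a * f (-a) := hswap ha1
  rw [one_mul, hfa] at hsw
  have hainv : a * (ε * a⁻¹) = ε := by field_simp
  nlinarith [mul_le_mul_of_nonneg_left (by linarith [hone] : 1 - f a ≤ ε * a⁻¹) hapos.le]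
end

section
/- Let f : ℝ → [0,1] be a differentiable sigmoid function such that x ↦ x·f(−x) is monotonically non-decreasing and bounded above by c > 0. Then x²·f'(−x) ≤ c for all x > 0; i.e., bounded error together with monotonicity implies f'(x) ∈ O(1/x²). -/
lemma mono_hasDerivAt_nonneg {h : ℝ → ℝ} {d x : ℝ} (hm : Monotone h)
    (hd : HasDerivAt h d x) : 0 ≤ d := by
  have h1 := hasDerivAt_iff_tendsto_slope.1 hd
  have h2 : Filter.Tendsto (slope h x) (nhdsWithin x (Set.Ioi x)) (nhds d) :=
    h1.mono_left (nhdsWithin_mono _ (fun y hy => ne_of_gt hy))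
  refine ge_of_tendsto h2 ?_
  filter_upwards [self_mem_nhdsWithin] with y hy
  rw [slope_def_field]
  exact div_nonneg (sub_nonneg.2 (hm (le_of_lt hy))) (sub_nonneg.2 (le_of_lt hy))

theorem stmt_8 (f : ℝ → ℝ)
    (hdiff : Differentiable ℝ f)
    (hrange : ∀ x, f x ∈ Set.Icc (0:ℝ) 1)
    (hmono : Monotone f)
    (hsym : ∀ x, f x + f (-x) = 1)
    (c : ℝ) (hc : 0 < c)
    (hswap : Monotone (fun x : ℝ => x * f (-x)))
    (hbound : ∀ x : ℝ, 0 < x → x * f (-x) ≤ c) :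
    ∀ x : ℝ, 0 < x → x^2 * deriv f (-x) ≤ c := by
  intro x hx
  have hfc : HasDerivAt (fun y : ℝ => f (-y)) (deriv f (-x) * (-1)) x :=
    ((hdiff (-x)).hasDerivAt).comp x (hasDerivAt_neg x)
  have hprod : HasDerivAt (fun y : ℝ => y * f (-y))
      (1 * f (-x) + x * (deriv f (-x) * (-1))) x :=
    (hasDerivAt_id x).mul hfc
  have hnn : 0 ≤ 1 * f (-x) + x * (deriv f (-x) * (-1)) :=
    mono_hasDerivAt_nonneg hswap hprod
  have key : x * deriv f (-x) ≤ f (-x) := by nlinarith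
  have h1 : x ^ 2 * deriv f (-x) ≤ x * f (-x) := by nlinarith
  exact h1.trans (hbound x hx)
end

section
/- For any 1-Lipschitz sigmoid function f with f(0) = 1/2 such that x ↦ x·f(−x) is monotonically non-decreasing, one has f(−x) ≥ 1/(16x) for all x > 1/4, and consequently the error bound sup_{x>0} x·f(−x) ≥ 1/16. -/
theorem stmt_9 (f : ℝ → ℝ)
    (hcont : Continuous f)
    (hrange : ∀ x, f x ∈ Set.Icc (0:ℝ) 1)
    (hmono : Monotone f)
    (hsym : ∀ x, f x + f (-x) = 1)
    (hlip : LipschitzWith 1 f)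
    (h0 : f 0 = 1/2)
    (hswap : Monotone (fun x : ℝ => x * f (-x))) :
    (∀ x : ℝ, 1/4 < x → 1/(16*x) ≤ f (-x)) ∧
    (∀ c : ℝ, (∀ x : ℝ, 0 < x → x * f (-x) ≤ c) → 1/16 ≤ c) := by
  have hd := hlip.dist_le_mul (-(1/4)) 0
  rw [Real.dist_eq, Real.dist_eq] at hd
  have hq : (1/4 : ℝ) ≤ f (-(1/4)) := by
    rw [h0] at hd
    have h1 : |f (-(1/4)) - 1/2| ≤ 1/4 := by
      have h2 : ((1:NNReal):ℝ) * |(-(1/4):ℝ) - 0| = 1/4 := by norm_num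
      linarith [hd, h2.le]
    have := abs_le.mp h1
    linarith [this.1]
  have hkey : (1/16 : ℝ) ≤ (1/4) * f (-(1/4)) := by nlinarith
  constructor
  · intro x hx
    have h1 : (1/4 : ℝ) * f (-(1/4)) ≤ x * f (-x) := hswap (le_of_lt hx)
    have hxpos : (0:ℝ) < x := lt_trans (by norm_num) hx
    rw [div_le_iff₀ (by positivity)]
    nlinarith
  · intro c hc
    have := hc (1/4) (by norm_num)
    linarith
end

section
/- No relaxed maximum operator of the form softmax_f(a,b) = a·f(a−b) + b·f(b−a), with f a sigmoid function satisfying f(x)+f(−x)=1 and 0 < f(x) < 1 for some x > 0, can be associative: if softmax_f is both idempotent and associative, then softmax_f(a,b) = max(a,b) for all a, b, contradicting strict relaxation. -/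
def softmax (f : ℝ → ℝ) (a b : ℝ) : ℝ := a * f (a - b) + b * f (b - a)

theorem stmt_15 (f : ℝ → ℝ) (hrange : ∀ x, f x ∈ Set.Icc (0:ℝ) 1)
    (hmono : Monotone f) (hsym : ∀ x, f x + f (-x) = 1)
    (hassoc : ∀ a b c : ℝ,
      softmax f a (softmax f b c) = softmax f (softmax f a b) c) :
    (∀ a b : ℝ, softmax f a b = max a b) ∧
    ¬ (∃ x : ℝ, 0 < x ∧ 0 < f x ∧ f x < 1) := by
  have hf0 : f 0 = 1/2 := by have := hsym 0; simp at this; linarith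
  have key : ∀ t : ℝ, 0 < t → f t = 1 := by
    intro t ht
    have hhalf : (1:ℝ)/2 ≤ f t := hf0 ▸ hmono ht.le
    have hle1 : f t ≤ 1 := (hrange t).2
    have hpos : 0 < t * f t := by nlinarith
    have h := hassoc t 0 0
    simp only [softmax, sub_zero, zero_sub, zero_mul, mul_zero, add_zero,
      sub_self] at h
    -- h : t * f t = t * f t * f (t * f t) + 0 * f (0 - t * f t)  (roughly)
    have h1 : f (t * f t) = 1 := by
      have h' : t * f t = t * f t * f (t * f t) := by linarith [h]
      have := mul_left_cancel₀ (ne_of_gt hpos) (by linarith : t * f t * 1 = t * f t * f (t * f t))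
      linarith
    have hle : t * f t ≤ t := by nlinarith
    have := hmono hle
    linarith [h1 ▸ this]
  have keyneg : ∀ t : ℝ, t < 0 → f t = 0 := by
    intro t ht
    have := hsym (-t)
    rw [neg_neg] at this
    have := key (-t) (by linarith)
    linarith
  have hmax : ∀ a b : ℝ, softmax f a b = max a b := by
    intro a b
    rcases lt_trichotomy a b with h | h | h
    · rw [max_eq_right h.le]
      simp only [softmax]
      rw [key (b-a) (by linarith), keyneg (a-b) (by linarith)]
      ring
    · subst h
      simp only [softmax, sub_self, hf0, max_self]
      ring
    · rw [max_eq_left h.le]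
      simp only [softmax]
      rw [key (a-b) (by linarith), keyneg (b-a) (by linarith)]
      ring
  refine ⟨hmax, ?_⟩
  rintro ⟨x, hx, _, hx1⟩
  rw [key x hx] at hx1
  exact lt_irrefl 1 hx1
end

section
/- If f : ℝ → [0,1] is a differentiable sigmoid function such that softmin_f(x,0) = x·f(−x) is non-decreasing in x, then both softmin_f(a,b) and softmax_f(a,b) are non-decreasing in each of the arguments a and b. -/
open Filter

def softmin (f : ℝ → ℝ) (a b : ℝ) : ℝ := a * f (b - a) + b * f (a - b)
theorem stmt_19 (f : ℝ → ℝ)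
    (hdiff : Differentiable ℝ f)
    (hrange : ∀ x, f x ∈ Set.Icc (0:ℝ) 1)
    (hmono : Monotone f)
    (hsym : ∀ x, f x + f (-x) = 1)
    (hbot : Tendsto f atBot (nhds 0))
    (htop : Tendsto f atTop (nhds 1))
    (hswap : Monotone (fun x : ℝ => x * f (-x))) :
    (∀ b : ℝ, Monotone (fun a => softmin f a b)) ∧
    (∀ a : ℝ, Monotone (fun b => softmin f a b)) ∧
    (∀ b : ℝ, Monotone (fun a => softmax f a b)) ∧
    (∀ a : ℝ, Monotone (fun b => softmax f a b)) := by
  have key1 : ∀ a b : ℝ, softmin f a b = (a - b) * f (-(a - b)) + b := by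
    intro a b
    have h := hsym (a - b)
    rw [neg_sub] at h ⊢
    unfold softmin
    linear_combination b * h
  have key2 : ∀ a b : ℝ, softmin f a b = (b - a) * f (-(b - a)) + a := by
    intro a b
    have h := hsym (b - a)
    rw [neg_sub] at h ⊢
    unfold softmin
    linear_combination a * h
  have m1 : ∀ b : ℝ, Monotone (fun a => softmin f a b) := by
    intro b x y hxy
    simp only [key1]
    exact add_le_add_left (hswap (sub_le_sub_right hxy b)) b
  have m2 : ∀ a : ℝ, Monotone (fun b => softmin f a b) := by
    intro a x y hxy
    simp only [key2]
    exact add_le_add_left (hswap (sub_le_sub_right hxy a)) a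
  have hh : Monotone (fun x : ℝ => x * f x) := by
    intro u v huv
    have h := hswap (neg_le_neg huv)
    simp only [neg_neg] at h
    dsimp at h ⊢
    nlinarith [h]
  have key3 : ∀ a b : ℝ, softmax f a b = (a - b) * f (a - b) + b := by
    intro a b
    have h := hsym (b - a)
    rw [neg_sub] at h
    unfold softmax
    linear_combination b * h
  have key4 : ∀ a b : ℝ, softmax f a b = (b - a) * f (b - a) + a := by
    intro a b
    have h := hsym (a - b)
    rw [neg_sub] at h
    unfold softmax
    linear_combination a * h
  refine ⟨m1, m2, ?_, ?_⟩
  · intro b x y hxy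
    simp only [key3]
    exact add_le_add_left (hh (sub_le_sub_right hxy b)) b
  · intro a x y hxy
    simp only [key4]
    exact add_le_add_left (hh (sub_le_sub_right hxy a)) a
end
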